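/- The Vandermonde product ∏_{1≤a<b≤k}(x_b − x_a) divides D_I in ℤ[x_1,…,x_k,t_1,…,t_N], and the quotient polynomial s_λ(x|t) := D_I / ∏_{1≤a<b≤k}(x_b − x_a) (the factorial Schur polynomial associated to I) is symmetric in the variables x_1,…,x_k. -/

import Mathlib

open scoped BigOperators

noncomputable section

/-- The polynomial ring `ℤ[x_1,…,x_k, t_1, t_2, …]`: the variable `Sum.inl b` is
`x_{b+1}` and `Sum.inr c` is `t_{c+1}` (`0`-based indexing). -/
abbrev PolyXT (k : ℕ) : Type := MvPolynomial (Fin k ⊕ ℕ) ℤ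

/-- The generalized factorial power `(x_b | t)^a = (x_b + t_1)(x_b + t_2) ⋯ (x_b + t_a)`,
with `(x_b | t)^0 = 1`. -/
noncomputable def factPow {k : ℕ} (b : Fin k) (a : ℕ) : PolyXT k :=
  ∏ c ∈ Finset.range a, (MvPolynomial.X (Sum.inl b) + MvPolynomial.X (Sum.inr c))

/-- The Vandermonde product `∏_{1 ≤ a < b ≤ k} (x_b − x_a)`. -/
noncomputable def vandermondeProd (k : ℕ) : PolyXT k :=
  ∏ a : Fin k, ∏ b ∈ Finset.Ioi a,
    (MvPolynomial.X (Sum.inl b) - MvPolynomial.X (Sum.inl a))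

/-- The determinant `D_I = det((x_b|t)^{i−1})_{i ∈ I, 1 ≤ b ≤ k}`, where the set
`I = {i_1 < ⋯ < i_k}` of positive integers is encoded by the strictly monotone
function `iI : Fin k → ℕ` (so the row `a` has exponent `iI a − 1`). -/
noncomputable def DI {k : ℕ} (iI : Fin k → ℕ) : PolyXT k :=
  Matrix.det (Matrix.of fun a b : Fin k => factPow b (iI a - 1))

/-- Auxiliary: a product of pairwise non-associated primes each dividing `n` divides `n`. -/
lemma aux_prod_primes_dvd {α : Type*} [CommMonoidWithZero α] [IsCancelMulZero α] {ι : Type*}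
    [DecidableEq ι] (s : Finset ι) (f : ι → α) :
    ∀ n : α, (∀ i ∈ s, Prime (f i)) →
    (∀ i ∈ s, ∀ j ∈ s, i ≠ j → ¬ Associated (f i) (f j)) →
    (∀ i ∈ s, f i ∣ n) → (∏ i ∈ s, f i) ∣ n := by
  induction s using Finset.induction_on with
  | empty => simp
  | @insert a s ha ih =>
    intro n hp hne hd
    obtain ⟨m, hm⟩ := hd a (Finset.mem_insert_self a s)
    rw [Finset.prod_insert ha, hm]
    refine mul_dvd_mul_left _ (ih m (fun i hi => hp i (Finset.mem_insert_of_mem hi))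
      (fun i hi j hj hij => hne i (Finset.mem_insert_of_mem hi) j
        (Finset.mem_insert_of_mem hj) hij) (fun i hi => ?_))
    have hdi : f i ∣ f a * m := hm ▸ hd i (Finset.mem_insert_of_mem hi)
    rcases (hp i (Finset.mem_insert_of_mem hi)).2.2 _ _ hdi with h | h
    · exact absurd ((hp i (Finset.mem_insert_of_mem hi)).associated_of_dvd
        (hp a (Finset.mem_insert_self a s)) h)
        (hne i (Finset.mem_insert_of_mem hi) a (Finset.mem_insert_self a s)
          (fun he => ha (he ▸ hi)))
    · exact h

/-- Auxiliary: `X i - X j` divides `p - p[X i := X j]`. -/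
lemma aux_X_sub_X_dvd {R σ : Type*} [CommRing R] [DecidableEq σ] (i j : σ)
    (p : MvPolynomial σ R) :
    (MvPolynomial.X i - MvPolynomial.X j : MvPolynomial σ R) ∣
      p - MvPolynomial.aeval (Function.update MvPolynomial.X i (MvPolynomial.X j)) p := by
  induction p using MvPolynomial.induction_on with
  | C a => simp
  | add p q hp hq =>
    have : (p + q) - MvPolynomial.aeval
        (Function.update MvPolynomial.X i (MvPolynomial.X j)) (p + q)
        = (p - MvPolynomial.aeval (Function.update MvPolynomial.X i (MvPolynomial.X j)) p)
          + (q - MvPolynomial.aeval (Function.update MvPolynomial.X i (MvPolynomial.X j)) q) := by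
      rw [map_add]; ring
    rw [this]; exact dvd_add hp hq
  | mul_X p v hp =>
    have h1 : (MvPolynomial.X i - MvPolynomial.X j : MvPolynomial σ R) ∣
        (MvPolynomial.X v - Function.update MvPolynomial.X i (MvPolynomial.X j) v) := by
      rcases eq_or_ne v i with rfl | h
      · rw [Function.update_self]
      · rw [Function.update_of_ne h]; simp
    have h2 : p * MvPolynomial.X v - MvPolynomial.aeval
        (Function.update MvPolynomial.X i (MvPolynomial.X j)) (p * MvPolynomial.X v)
        = (p - MvPolynomial.aeval (Function.update MvPolynomial.X i (MvPolynomial.X j)) p)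
            * MvPolynomial.X v
          + MvPolynomial.aeval (Function.update MvPolynomial.X i (MvPolynomial.X j)) p
            * (MvPolynomial.X v - Function.update MvPolynomial.X i (MvPolynomial.X j) v) := by
      rw [map_mul, MvPolynomial.aeval_X]; ring
    rw [h2]
    exact dvd_add (hp.mul_right _) (h1.mul_left _)

/-- Auxiliary: `X i - X j` is prime in a multivariate polynomial ring over a domain. -/
lemma aux_prime_X_sub_X {R σ : Type*} [CommRing R] [IsDomain R] {i j : σ} (h : j ≠ i) :
    Prime (MvPolynomial.X i - MvPolynomial.X j : MvPolynomial σ R) := by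
  classical
  let e : MvPolynomial σ R ≃ₐ[R] Polynomial (MvPolynomial {x : σ // x ≠ i} R) :=
    (MvPolynomial.renameEquiv R (Equiv.optionSubtypeNe i).symm).trans
      (MvPolynomial.optionEquivLeft R _)
  have he : e (MvPolynomial.X i - MvPolynomial.X j)
      = Polynomial.X - Polynomial.C (MvPolynomial.X ⟨j, h⟩) := by
    have h1 : e (MvPolynomial.X i) = Polynomial.X := by
      simp only [e, AlgEquiv.trans_apply, MvPolynomial.renameEquiv_apply,
        MvPolynomial.rename_X, Equiv.optionSubtypeNe_symm_self,
        MvPolynomial.optionEquivLeft_X_none]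
    have h2 : e (MvPolynomial.X j) = Polynomial.C (MvPolynomial.X ⟨j, h⟩) := by
      simp only [e, AlgEquiv.trans_apply, MvPolynomial.renameEquiv_apply,
        MvPolynomial.rename_X, Equiv.optionSubtypeNe_symm_of_ne h,
        MvPolynomial.optionEquivLeft_X_some]
    rw [map_sub, h1, h2]
  have : Prime (e (MvPolynomial.X i - MvPolynomial.X j)) := by
    rw [he]; exact Polynomial.prime_X_sub_C _
  exact (MulEquiv.prime_iff e).mp this

/-- Auxiliary: renaming the x-variables by `σ` permutes `factPow`. -/
lemma aux_rename_factPow {k : ℕ} (σ : Equiv.Perm (Fin k)) (b : Fin k) (a : ℕ) :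
    MvPolynomial.rename (Sum.map σ id) (factPow b a) = factPow (σ b) a := by
  simp [factPow, map_prod]

/-- Let `I = {i_1 < ⋯ < i_k}` be a set of `k` positive integers.  Then the
Vandermonde product `∏_{1≤a<b≤k}(x_b − x_a)` divides
`D_I = det((x_b|t)^{i−1})_{i ∈ I, 1≤b≤k}`, and the quotient polynomial
`s_λ(x|t) = D_I / ∏_{1≤a<b≤k}(x_b − x_a)` (the factorial Schur polynomial) is symmetric
in the variables `x_1, …, x_k`:  it is fixed by every renaming of the `x`-variables. -/
theorem vandermonde_divides_DI_and_quotient_symmetric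
    (k : ℕ) (iI : Fin k → ℕ) (hmono : StrictMono iI) (hpos : ∀ a, 1 ≤ iI a) :
    vandermondeProd k ∣ DI iI ∧
      ∃ s : PolyXT k, DI iI = vandermondeProd k * s ∧
        ∀ σ : Equiv.Perm (Fin k),
          MvPolynomial.rename (Sum.map σ id) s = s := by
  classical
  -- The Vandermonde product as a product over a sigma type of pairs a < b.
  set T : Finset ((_ : Fin k) × Fin k) :=
    (Finset.univ : Finset (Fin k)).sigma (fun a => Finset.Ioi a) with hT
  set F : ((_ : Fin k) × Fin k) → PolyXT k :=
    fun p => MvPolynomial.X (Sum.inl p.2) - MvPolynomial.X (Sum.inl p.1) with hF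
  have hVprod : vandermondeProd k = ∏ p ∈ T, F p := by
    rw [hT, Finset.prod_sigma]; rfl
  have hmemT : ∀ p ∈ T, p.1 < p.2 := by
    intro p hp
    rw [hT, Finset.mem_sigma] at hp
    exact Finset.mem_Ioi.mp hp.2
  -- Each factor is prime.
  have hprime : ∀ p ∈ T, Prime (F p) := by
    intro p hp
    have : (Sum.inl p.1 : Fin k ⊕ ℕ) ≠ Sum.inl p.2 := by
      simp [Fin.ne_of_lt (hmemT p hp)]
    exact aux_prime_X_sub_X this
  -- Pairwise non-associated.
  have hassoc : ∀ p ∈ T, ∀ q ∈ T, p ≠ q → ¬ Associated (F p) (F q) := by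
    rintro ⟨a, b⟩ hp ⟨c, d⟩ hq hpq hass
    have hab : a < b := hmemT _ hp
    have hcd : c < d := hmemT _ hq
    -- find a member of {c,d} outside {a,b}
    have hw : ∃ w : Fin k, (w = c ∨ w = d) ∧ w ≠ a ∧ w ≠ b := by
      by_cases hca : c = a
      · subst hca
        exact ⟨d, Or.inr rfl, (Fin.ne_of_lt hcd).symm, fun h => hpq (by rw [h])⟩
      · by_cases hcb : c = b
        · subst hcb
          exact ⟨d, Or.inr rfl, (Fin.ne_of_lt (hab.trans hcd)).symm,
            (Fin.ne_of_lt hcd).symm⟩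
        · exact ⟨c, Or.inl rfl, hca, hcb⟩
    obtain ⟨w, hwcd, hwa, hwb⟩ := hw
    set v : Fin k ⊕ ℕ → ℤ := fun s => if s = Sum.inl w then 1 else 0 with hv
    obtain ⟨t, ht⟩ := hass.dvd
    have := congrArg (MvPolynomial.eval v) ht
    rw [map_mul, map_sub, map_sub, MvPolynomial.eval_X, MvPolynomial.eval_X,
      MvPolynomial.eval_X, MvPolynomial.eval_X] at this
    have hvb : v (Sum.inl b) = 0 := by simp [hv, (Sum.inl_injective.ne_iff).mpr (Ne.symm hwb)]
    have hva : v (Sum.inl a) = 0 := by simp [hv, (Sum.inl_injective.ne_iff).mpr (Ne.symm hwa)]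
    rw [hvb, hva, sub_zero, zero_mul] at this
    rcases hwcd with rfl | rfl
    · have hdw : (Sum.inl d : Fin k ⊕ ℕ) ≠ Sum.inl w := by
        simp [(Fin.ne_of_lt hcd).symm]
      have hvd : v (Sum.inl d) = 0 := by simp [hv, hdw]
      have hvc : v (Sum.inl w) = 1 := by simp [hv]
      have h2 : v (Sum.inl d) - v (Sum.inl w) = 0 := this
      rw [hvd, hvc] at h2
      norm_num at h2
    · have hcw : (Sum.inl c : Fin k ⊕ ℕ) ≠ Sum.inl w := by
        simp [Fin.ne_of_lt hcd]
      have hvd : v (Sum.inl w) = 1 := by simp [hv]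
      have hvc : v (Sum.inl c) = 0 := by simp [hv, hcw]
      have h2 : v (Sum.inl w) - v (Sum.inl c) = 0 := this
      rw [hvd, hvc] at h2
      norm_num at h2
  -- Each factor divides D_I.
  have hdvdDI : ∀ p ∈ T, F p ∣ DI iI := by
    rintro ⟨a, b⟩ hp
    have hab : a < b := hmemT _ hp
    set φ : PolyXT k →ₐ[ℤ] PolyXT k :=
      MvPolynomial.aeval (Function.update MvPolynomial.X (Sum.inl b)
        (MvPolynomial.X (Sum.inl a))) with hφ
    have hsub := aux_X_sub_X_dvd (R := ℤ) (Sum.inl b : Fin k ⊕ ℕ) (Sum.inl a) (DI iI)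
    have hφD : φ (DI iI) = 0 := by
      rw [hφ, DI, AlgHom.map_det, show (MvPolynomial.aeval (Function.update MvPolynomial.X
          (Sum.inl b) (MvPolynomial.X (Sum.inl a))) : PolyXT k →ₐ[ℤ] PolyXT k).mapMatrix
          (Matrix.of fun a b : Fin k => factPow b (iI a - 1))
        = (Matrix.of fun a b : Fin k => factPow b (iI a - 1)).map
          (MvPolynomial.aeval (Function.update MvPolynomial.X (Sum.inl b)
            (MvPolynomial.X (Sum.inl a)))) from rfl]
      apply Matrix.det_zero_of_column_eq (Fin.ne_of_gt hab)
      intro r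
      have hfact : ∀ b' : Fin k, ∀ e : ℕ,
          (MvPolynomial.aeval (Function.update MvPolynomial.X (Sum.inl b)
            (MvPolynomial.X (Sum.inl a))) : PolyXT k →ₐ[ℤ] PolyXT k) (factPow b' e)
            = factPow (if b' = b then a else b') e := by
        intro b' e
        rw [factPow, map_prod]
        rcases eq_or_ne b' b with rfl | hne
        · simp [factPow, Function.update_self, Function.update_of_ne, factPow]
        · simp only [if_neg hne]
          rw [factPow]
          refine Finset.prod_congr rfl fun c _ => ?_
          rw [map_add, MvPolynomial.aeval_X, MvPolynomial.aeval_X,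
            Function.update_of_ne (by simp [hne]), Function.update_of_ne (by simp)]
      simp only [Matrix.map_apply, Matrix.of_apply]
      rw [hfact b, hfact a, if_pos rfl, if_neg (Fin.ne_of_lt hab)]
    rw [hφ] at hφD
    rw [hφD, sub_zero] at hsub
    exact hsub
  have hdvd : vandermondeProd k ∣ DI iI := by
    rw [hVprod]
    exact aux_prod_primes_dvd T F (DI iI) hprime hassoc hdvdDI
  refine ⟨hdvd, ?_⟩
  obtain ⟨s, hs⟩ := hdvd
  refine ⟨s, hs, fun σ => ?_⟩
  -- The Vandermonde product is nonzero.
  have hVne : vandermondeProd k ≠ 0 := by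
    rw [hVprod]
    exact Finset.prod_ne_zero_iff.mpr fun p hp => (hprime p hp).ne_zero
  -- rename acts on the Vandermonde product by the sign of σ.
  have hrV : MvPolynomial.rename (Sum.map σ id) (vandermondeProd k)
      = ((Equiv.Perm.sign σ : ℤ) : PolyXT k) * vandermondeProd k := by
    have hVdet : vandermondeProd k
        = (Matrix.vandermonde fun b : Fin k =>
            (MvPolynomial.X (Sum.inl b) : PolyXT k)).det := by
      rw [Matrix.det_vandermonde]; rfl
    rw [hVdet, AlgHom.map_det (MvPolynomial.rename (Sum.map (σ : Fin k → Fin k) id))]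
    have hmap : (MvPolynomial.rename (Sum.map (σ : Fin k → Fin k) id)).mapMatrix
          (Matrix.vandermonde fun b : Fin k => (MvPolynomial.X (Sum.inl b) : PolyXT k))
        = (Matrix.vandermonde fun b : Fin k =>
            (MvPolynomial.X (Sum.inl b) : PolyXT k)).submatrix σ id := by
      refine Matrix.ext fun i j => ?_
      show MvPolynomial.rename (Sum.map (σ : Fin k → Fin k) id)
          ((MvPolynomial.X (Sum.inl i) : PolyXT k) ^ (j : ℕ))
        = (MvPolynomial.X (Sum.inl (σ i)) : PolyXT k) ^ (j : ℕ)
      rw [map_pow, MvPolynomial.rename_X]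
      rfl
    rw [hmap, Matrix.det_permute]
  -- rename acts on D_I by the sign of σ.
  have hrD : MvPolynomial.rename (Sum.map σ id) (DI iI)
      = ((Equiv.Perm.sign σ : ℤ) : PolyXT k) * DI iI := by
    rw [DI, AlgHom.map_det (MvPolynomial.rename (Sum.map (σ : Fin k → Fin k) id))]
    have hmap : (MvPolynomial.rename (Sum.map (σ : Fin k → Fin k) id)).mapMatrix
          (Matrix.of fun a b : Fin k => factPow b (iI a - 1))
        = (Matrix.of fun a b : Fin k => factPow b (iI a - 1)).submatrix id σ := by
      refine Matrix.ext fun i j => ?_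
      show MvPolynomial.rename (Sum.map (σ : Fin k → Fin k) id) (factPow j (iI i - 1))
        = factPow (σ j) (iI i - 1)
      exact aux_rename_factPow σ j (iI i - 1)
    rw [hmap, Matrix.det_permute']
  -- Cancel to get the symmetry of the quotient.
  have hmain : ((Equiv.Perm.sign σ : ℤ) : PolyXT k) * vandermondeProd k
        * MvPolynomial.rename (Sum.map σ id) s
      = ((Equiv.Perm.sign σ : ℤ) : PolyXT k) * vandermondeProd k * s := by
    have h1 := congrArg (MvPolynomial.rename (Sum.map σ id)) hs
    rw [hrD, map_mul, hrV] at h1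
    rw [← h1, hs]
    ring
  have hεV : ((Equiv.Perm.sign σ : ℤ) : PolyXT k) * vandermondeProd k ≠ 0 := by
    apply mul_ne_zero _ hVne
    rcases Int.units_eq_one_or (Equiv.Perm.sign σ) with h | h <;> rw [h] <;> simp
  exact mul_left_cancel₀ hεV hmain

end
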